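/- Let p be prime and let x, y be the p×p matrices over ℚ[t^{±1}] where x is the companion-type matrix with 1's on the superdiagonal and t in position (p,1), and y = a·x·a where a is the diagonal matrix with entries -1, -1, 1, ..., 1. Then (x·a)^p = t·I_p, and consequently (x·y)^{(p-1)/2}·x = y·(x·y)^{(p-1)/2}. -/

import Mathlib

open Polynomial Matrix
open Fin.NatCast Fin.CommRing

/-- The `p×p` companion-type matrix with `1`'s on the superdiagonal and `t` in
position `(p,1)`. -/
noncomputable def xMat (p : ℕ) : Matrix (Fin p) (Fin p) ℚ[X] :=
  Matrix.of fun i j => if (i : ℕ) + 1 = (j : ℕ) then 1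
    else if (i : ℕ) = p - 1 ∧ (j : ℕ) = 0 then X else 0

/-- The diagonal matrix `diag(-1, -1, 1, …, 1)`. -/
noncomputable def aMat (p : ℕ) : Matrix (Fin p) (Fin p) ℚ[X] :=
  Matrix.of fun i j => if i = j then (if (i : ℕ) < 2 then -1 else 1) else 0

-- key induction lemma
theorem key_pow (n : ℕ) (c : Fin (n+1) → ℚ[X]) (k : ℕ) :
    (Matrix.of fun i j : Fin (n+1) => if j = i + 1 then c j else 0) ^ k =
    Matrix.of (fun i j : Fin (n+1) => if j = i + (k : Fin (n+1)) then
      ∏ m ∈ Finset.range k, c (i + 1 + (m : Fin (n+1))) else 0) := by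
  induction k with
  | zero =>
    ext i j
    simp [Matrix.one_apply, eq_comm]
  | succ k ih =>
    rw [pow_succ, ih]
    ext i j
    rw [Matrix.mul_apply]
    simp only [Matrix.of_apply]
    rw [Finset.sum_eq_single (i + (k : Fin (n+1)))]
    · by_cases h : j = i + (k : Fin (n+1)) + 1
      · rw [if_pos rfl, if_pos h, if_pos (by push_cast; rw [h]; ring)]
        rw [Finset.prod_range_succ, h]
        congr 2
        ring
      · rw [if_pos rfl, if_neg h, if_neg (by push_cast; intro hh; apply h; rw [hh]; ring), mul_zero]
    · intro b _ hb
      rw [if_neg hb, zero_mul]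
    · intro h; exact absurd (Finset.mem_univ _) h

theorem key (n : ℕ) (c : Fin (n+1) → ℚ[X]) :
    (Matrix.of fun i j : Fin (n+1) => if j = i + 1 then c j else 0) ^ (n+1) =
      (∏ z : Fin (n+1), c z) • (1 : Matrix (Fin (n+1)) (Fin (n+1)) ℚ[X]) := by
  rw [key_pow]
  ext i j
  have h0 : ((n+1 : ℕ) : Fin (n+1)) = 0 := Fin.natCast_self _
  have hprod : (∏ m ∈ Finset.range (n+1), c (i + 1 + (m : Fin (n+1)))) = ∏ z : Fin (n+1), c z := by
    rw [← Fin.prod_univ_eq_prod_range (fun m => c (i + 1 + (m : Fin (n+1)))) (n+1)]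
    calc (∏ m : Fin (n+1), c (i + 1 + ((m : ℕ) : Fin (n+1))))
        = ∏ m : Fin (n+1), c (i + 1 + m) := by
          apply Finset.prod_congr rfl; intro m _; rw [Fin.cast_val_eq_self]
      _ = ∏ z : Fin (n+1), c z := Equiv.prod_comp (Equiv.addLeft (i+1)) c
  simp only [Matrix.of_apply, h0, add_zero, hprod]
  simp [Matrix.smul_apply, Matrix.one_apply, eq_comm]

noncomputable def cFun (n : ℕ) : Fin (n+1) → ℚ[X] :=
  fun z => if z = 0 then -X else if z = 1 then -1 else 1

theorem hxa (n : ℕ) (hn : 1 ≤ n) :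
    xMat (n+1) * aMat (n+1) =
      Matrix.of fun i j : Fin (n+1) => if j = i + 1 then cFun n j else 0 := by
  refine Matrix.ext fun a b => ?_
  rw [Matrix.mul_apply]
  have hdiag : ∀ l : Fin (n+1), aMat (n+1) l b = if l = b then (if (b:ℕ) < 2 then -1 else 1) else 0 := by
    intro l; simp only [aMat, Matrix.of_apply]
    by_cases h : l = b
    · subst h; simp
    · simp [h]
  simp only [hdiag, mul_ite, mul_zero, Finset.sum_ite_eq', Finset.mem_univ, if_true]
  simp only [xMat, cFun, Matrix.of_apply]
  have h1v : ((1 : Fin (n+1)) : ℕ) = 1 := by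
    have : (1:ℕ) < n+1 := by omega
    simpa using Fin.val_cast_of_lt this
  simp only [Fin.ext_iff, Fin.val_add_one, Fin.val_last, Fin.val_zero, h1v,
    apply_ite (Fin.val)]
  split_ifs <;> first | ring1 | omega | (exfalso; omega)

theorem prod_cFun (n : ℕ) (hn : 1 ≤ n) : (∏ z : Fin (n+1), cFun n z) = X := by
  have h01 : (0 : Fin (n+1)) ≠ 1 := by
    intro h
    have := congrArg Fin.val h
    have h1v : ((1 : Fin (n+1)) : ℕ) = 1 := by
      have : (1:ℕ) < n+1 := by omega
      simpa using Fin.val_cast_of_lt this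
    rw [h1v] at this; simp at this
  have hsub : ({0, 1} : Finset (Fin (n+1))) ⊆ Finset.univ := Finset.subset_univ _
  rw [← Finset.prod_subset hsub (by
    intro z _ hz
    simp only [Finset.mem_insert, Finset.mem_singleton, not_or] at hz
    simp [cFun, hz.1, hz.2])]
  rw [Finset.prod_insert (by simp [h01]), Finset.prod_singleton]
  simp [cFun, h01.symm]

theorem aMat_sq (p : ℕ) : aMat p * aMat p = 1 := by
  refine Matrix.ext fun a b => ?_
  rw [Matrix.mul_apply, Matrix.one_apply]
  simp only [aMat, Matrix.of_apply]
  rw [Finset.sum_eq_single a]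
  · by_cases h : a = b
    · subst h
      simp only [if_pos rfl]
      split_ifs <;> ring1
    · simp [h]
  · intro l _ hl
    simp [Ne.symm hl]
  · intro h; exact absurd (Finset.mem_univ _) h

/-- With `x` the `t`-companion matrix, `a = diag(-1,-1,1,…,1)` and `y = a·x·a`,
one has `(x·a)^p = t·I_p`, and consequently
`(x·y)^{(p-1)/2}·x = y·(x·y)^{(p-1)/2}`. -/
theorem stmt_11 (p : ℕ) (hp : p.Prime) :
    (xMat p * aMat p) ^ p = (X : ℚ[X]) • (1 : Matrix (Fin p) (Fin p) ℚ[X]) ∧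
    (xMat p * (aMat p * xMat p * aMat p)) ^ ((p - 1) / 2) * xMat p =
      (aMat p * xMat p * aMat p) *
        (xMat p * (aMat p * xMat p * aMat p)) ^ ((p - 1) / 2) := by
  obtain ⟨n, rfl⟩ : ∃ n, p = n + 1 := ⟨p - 1, (Nat.succ_pred_eq_of_pos hp.pos).symm⟩
  have hn : 1 ≤ n := by
    by_contra h
    interval_cases n
    · exact Nat.not_prime_one hp
  have hpow : (xMat (n+1) * aMat (n+1)) ^ (n+1) = (X : ℚ[X]) • 1 := by
    rw [hxa n hn, key, prod_cFun n hn]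
  refine ⟨hpow, ?_⟩
  set A := xMat (n+1) with hA
  set B := aMat (n+1) with hB
  have hBB : B * B = 1 := aMat_sq (n+1)
  have hM2 : A * (B * A * B) = (A * B) * (A * B) := by noncomm_ring
  rcases Nat.Prime.eq_two_or_odd' hp with h2 | hodd
  · -- p = 2, n = 1
    have hn1 : n = 1 := by omega
    subst hn1
    norm_num
    -- goal: A = B * A * B
    have hBneg : B = -1 := by
      refine Matrix.ext fun a b => ?_
      fin_cases a <;> fin_cases b <;> simp [hB, aMat, Matrix.one_apply]
    rw [hBneg]; noncomm_ring
  · -- odd case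
    obtain ⟨m, hm⟩ := hodd
    have h2k : 2 * ((n + 1 - 1) / 2) = n := by omega
    rw [hM2, show A * B * (A * B) = (A * B) ^ 2 from (sq (A*B)).symm, ← pow_mul, h2k]
    have hL : (A * B) ^ n * A = (X : ℚ[X]) • B := by
      have : ((A * B) ^ n * A) * B = (X : ℚ[X]) • (1 : Matrix (Fin (n+1)) (Fin (n+1)) ℚ[X]) := by
        rw [mul_assoc, ← pow_succ, hpow]
      calc (A * B) ^ n * A = ((A * B) ^ n * A) * (B * B) := by rw [hBB, mul_one]
        _ = (((A * B) ^ n * A) * B) * B := by noncomm_ring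
        _ = ((X : ℚ[X]) • (1 : Matrix (Fin (n+1)) (Fin (n+1)) ℚ[X])) * B := by rw [this]
        _ = (X : ℚ[X]) • B := by rw [smul_mul_assoc, one_mul]
    have hR : B * A * B * (A * B) ^ n = (X : ℚ[X]) • B := by
      have : (A * B) * (A * B) ^ n = (X : ℚ[X]) • (1 : Matrix (Fin (n+1)) (Fin (n+1)) ℚ[X]) := by
        rw [← pow_succ', hpow]
      calc B * A * B * (A * B) ^ n = B * ((A * B) * (A * B) ^ n) := by noncomm_ring
        _ = B * ((X : ℚ[X]) • (1 : Matrix (Fin (n+1)) (Fin (n+1)) ℚ[X])) := by rw [this]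
        _ = (X : ℚ[X]) • B := by rw [mul_smul_comm, mul_one]
    rw [hL, hR]
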